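/- Given a supported solution J = {HasC(v, μ(v)) | v ∈ V} ∪ {E_t(u,v) | (u,v) ∈ E} ∪ {Col_t(r), Col_t(g), Col_t(b)} induced by a proper 3-coloring μ of a graph G = (V,E), the Boolean query Q = (∃x,y HasC(x,y) ∧ ¬Col_t(y)) ∨ (∃x,y,z E_t(x,y) ∧ HasC(x,z) ∧ HasC(y,z)) evaluates to false on J. -/
import Mathlib



namespace DE

abbrev Var := ℕ

inductive Term (C : Type) where
  | const : C → Term C
  | null : ℕ → Term C

structure Atom (R C : Type) where
  rel : R
  args : List (Var ⊕ C)

structure Fact (R C : Type) where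
  rel : R
  args : List (Term C)

abbrev Instance (R C : Type) := Set (Fact R C)

def termOf {C : Type} (h : Var → Term C) : Var ⊕ C → Term C
  | Sum.inl v => h v
  | Sum.inr c => Term.const c

def applyAtom {R C : Type} (h : Var → Term C) (a : Atom R C) : Fact R C :=
  ⟨a.rel, a.args.map (termOf h)⟩

/-- `h` maps every atom of `as` into the instance `I`. -/
def holdsBody {R C : Type} (I : Instance R C) (h : Var → Term C)
    (as : List (Atom R C)) : Prop :=
  ∀ a ∈ as, applyAtom h a ∈ I

/-- A tuple-generating dependency. -/
structure TGD (R C : Type) where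
  body : List (Atom R C)
  head : List (Atom R C)
  frontier : List Var
  exvars : List Var

def varsOf {R C : Type} (as : List (Atom R C)) : Set Var :=
  {v | ∃ a ∈ as, (Sum.inl v : Var ⊕ C) ∈ a.args}

/-- Well-formedness of a TGD: frontier variables occur in the body, existential
variables do not, and every head variable is a frontier or existential variable. -/
def TGD.wf {R C : Type} (ρ : TGD R C) : Prop :=
  (∀ v ∈ ρ.frontier, v ∈ varsOf ρ.body) ∧
  (∀ z ∈ ρ.exvars, z ∉ varsOf ρ.body) ∧
  (∀ v ∈ varsOf ρ.head, v ∈ ρ.frontier ∨ v ∈ ρ.exvars)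

/-- Satisfaction of a TGD by an instance. -/
def satTGD {R C : Type} (I : Instance R C) (ρ : TGD R C) : Prop :=
  ∀ h : Var → Term C, holdsBody I h ρ.body →
    ∃ h' : Var → Term C, (∀ v ∈ varsOf ρ.body, h' v = h v) ∧ holdsBody I h' ρ.head

/-- An equality-generating dependency. -/
structure EGD (R C : Type) where
  body : List (Atom R C)
  lhs : Var
  rhs : Var

def satEGD {R C : Type} (I : Instance R C) (η : EGD R C) : Prop :=
  ∀ h : Var → Term C, holdsBody I h η.body → h η.lhs = h η.rhs

/-- An ex-choice: given a TGD and a tuple of constants for its frontier,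
a constant for each existential variable. -/
abbrev ExChoice (R C : Type) := TGD R C → List C → Var → C

def constHom {C : Type} (h : Var → C) : Var → Term C := fun v => Term.const (h v)

/-- `I` satisfies all ground versions of the TGD `ρ` that are coherent with `γ`. -/
def satTGDcoh {R C : Type} (I : Instance R C) (γ : ExChoice R C) (ρ : TGD R C) : Prop :=
  ∀ h : Var → C, (∀ z ∈ ρ.exvars, h z = γ ρ (ρ.frontier.map h) z) →
    holdsBody I (constHom h) ρ.body → holdsBody I (constHom h) ρ.head

/-- A data exchange setting: source-to-target TGDs, target TGDs, target EGDs. -/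
structure Setting (R C : Type) where
  sigmaST : List (TGD R C)
  sigmaT : List (TGD R C)
  sigmaE : List (EGD R C)

def Setting.wf {R C : Type} (S : Setting R C) : Prop :=
  ∀ ρ ∈ S.sigmaST ++ S.sigmaT, ρ.wf

/-- Classical solution: `I ∪ J` satisfies `Σst` and `J` satisfies `Σt`. -/
def classicalSolution {R C : Type} (S : Setting R C) (I J : Instance R C) : Prop :=
  J.Finite ∧ (∀ ρ ∈ S.sigmaST, satTGD (I ∪ J) ρ) ∧
    (∀ ρ ∈ S.sigmaT, satTGD J ρ) ∧ (∀ η ∈ S.sigmaE, satEGD J η)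

def supportedWith {R C : Type} (S : Setting R C) (γ : ExChoice R C)
    (I J : Instance R C) : Prop :=
  (∀ ρ ∈ S.sigmaST, satTGDcoh (I ∪ J) γ ρ) ∧
    (∀ ρ ∈ S.sigmaT, satTGDcoh J γ ρ) ∧ (∀ η ∈ S.sigmaE, satEGD J η)

/-- Supported solution: for some ex-choice `γ`, `I ∪ J` satisfies `Σst^γ`,
`J` satisfies `Σt^γ`, and no proper subset of `J` does. -/
def supportedSolution {R C : Type} (S : Setting R C) (I J : Instance R C) : Prop :=
  J.Finite ∧ ∃ γ : ExChoice R C, supportedWith S γ I J ∧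
    ∀ J' : Instance R C, J' ⊂ J → ¬ supportedWith S γ I J'

/-- An instance without labeled nulls (a database). -/
def nullFree {R C : Type} (I : Instance R C) : Prop :=
  ∀ f ∈ I, ∀ t ∈ f.args, ∃ c : C, t = Term.const c

end DE

inductive GRel : Type
  | V | Es | Col | ColT | Et | HasC

namespace ThreeCol

def rho1 (C : Type) : DE.TGD GRel C :=
  ⟨[⟨GRel.Col, [Sum.inl 0]⟩], [⟨GRel.ColT, [Sum.inl 0]⟩], [0], []⟩

def rho2 (C : Type) : DE.TGD GRel C :=
  ⟨[⟨GRel.Es, [Sum.inl 0, Sum.inl 1]⟩], [⟨GRel.Et, [Sum.inl 0, Sum.inl 1]⟩], [0, 1], []⟩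

def rho3 (C : Type) : DE.TGD GRel C :=
  ⟨[⟨GRel.V, [Sum.inl 0]⟩], [⟨GRel.HasC, [Sum.inl 0, Sum.inl 1]⟩], [0], [1]⟩

def setting (C : Type) : DE.Setting GRel C := ⟨[rho1 C, rho2 C, rho3 C], [], []⟩

/-- The source instance `I_G` encoding the graph `(Vtx, E)` and the three colors. -/
def IG {Vtx C : Type} (E : Vtx → Vtx → Prop) (emb : Vtx → C) (r g b : C) :
    DE.Instance GRel C :=
  {f | (∃ v, f = ⟨GRel.V, [DE.Term.const (emb v)]⟩) ∨
       (∃ u v, E u v ∧ f = ⟨GRel.Es, [DE.Term.const (emb u), DE.Term.const (emb v)]⟩) ∨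
       f = ⟨GRel.Col, [DE.Term.const r]⟩ ∨
       f = ⟨GRel.Col, [DE.Term.const g]⟩ ∨
       f = ⟨GRel.Col, [DE.Term.const b]⟩}

/-- `Q1`: some node has a "color" that is not one of the copied colors. -/
def Q1 {C : Type} (J : DE.Instance GRel C) : Prop :=
  ∃ x y : DE.Term C, (⟨GRel.HasC, [x, y]⟩ : DE.Fact GRel C) ∈ J ∧
    (⟨GRel.ColT, [y]⟩ : DE.Fact GRel C) ∉ J

/-- `Q2`: the two endpoints of some edge share a color. -/
def Q2 {C : Type} (J : DE.Instance GRel C) : Prop :=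
  ∃ x y z : DE.Term C, (⟨GRel.Et, [x, y]⟩ : DE.Fact GRel C) ∈ J ∧
    (⟨GRel.HasC, [x, z]⟩ : DE.Fact GRel C) ∈ J ∧
    (⟨GRel.HasC, [y, z]⟩ : DE.Fact GRel C) ∈ J

/-- The target instance induced by a coloring `μ`. -/
def Jsol {Vtx C : Type} (E : Vtx → Vtx → Prop) (emb : Vtx → C) (r g b : C)
    (μ : Vtx → C) : DE.Instance GRel C :=
  {f | (∃ v, f = ⟨GRel.HasC, [DE.Term.const (emb v), DE.Term.const (μ v)]⟩) ∨
       (∃ u v, E u v ∧ f = ⟨GRel.Et, [DE.Term.const (emb u), DE.Term.const (emb v)]⟩) ∨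
       f = ⟨GRel.ColT, [DE.Term.const r]⟩ ∨
       f = ⟨GRel.ColT, [DE.Term.const g]⟩ ∨
       f = ⟨GRel.ColT, [DE.Term.const b]⟩}

end ThreeCol

open ThreeCol in
/-- the query `Q = Q1 ∨ Q2` is false on the target instance
induced by a proper 3-coloring `μ`. -/
theorem query_false_on_coloring_solution {Vtx C : Type}
    (E : Vtx → Vtx → Prop) (emb : Vtx → C) (hemb : Function.Injective emb)
    (r g b : C) (hrg : r ≠ g) (hrb : r ≠ b) (hgb : g ≠ b)
    (hdisj : ∀ v, emb v ≠ r ∧ emb v ≠ g ∧ emb v ≠ b)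
    (μ : Vtx → C) (hμcol : ∀ v, μ v = r ∨ μ v = g ∨ μ v = b)
    (hμ : ∀ u v, E u v → μ u ≠ μ v) :
    ¬ Q1 (Jsol E emb r g b μ) ∧ ¬ Q2 (Jsol E emb r g b μ) := by
  constructor
  · rintro ⟨x, y, hxy, hy⟩
    simp only [ThreeCol.Jsol, Set.mem_setOf_eq] at hxy hy
    rcases hxy with ⟨v, hv⟩ | ⟨u, v, _, hv⟩ | hv | hv | hv <;> simp_all
    rcases hμcol v with h | h | h <;> simp [h] at hy <;> tauto
  · rintro ⟨x, y, z, het, hx, hy⟩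
    simp only [ThreeCol.Jsol, Set.mem_setOf_eq] at het hx hy
    rcases het with ⟨v, hv⟩ | ⟨u, v, huv, hv⟩ | hv | hv | hv <;> simp_all
    obtain ⟨u', hu1, hu2⟩ := hx
    obtain ⟨v', hv1, hv2⟩ := hy
    rw [hu2] at hv2
    simp only [DE.Term.const.injEq] at hv2
    exact hμ u v huv (by rw [hemb hu1, hemb hv1, hv2])
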